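/- Let I ⊆ P be an ideal, σ a monomial order, and G a minimal monic σ-Gröbner basis of I such that every polynomial in G is factor-closed. Then for every monomial order τ: LM_τ(g) = LM_σ(g) for each g ∈ G, the set G is a τ-Gröbner basis of I, and LT_τ(I) = LT_σ(I). In particular, I has GFan number 1. -/

import Mathlib

open MvPolynomial

/-- The leading monomial (σ-largest exponent vector in the support) of a polynomial. -/
noncomputable def leadMonomial {n : ℕ} {K : Type*} [Field K]
    (m : MonomialOrder (Fin n)) (f : MvPolynomial (Fin n) K) : Fin n →₀ ℕ :=
  m.toSyn.symm (f.support.sup fun s => m.toSyn s)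

/-- The leading term ideal of an ideal. -/
noncomputable def leadTermIdeal {n : ℕ} {K : Type*} [Field K]
    (m : MonomialOrder (Fin n)) (I : Ideal (MvPolynomial (Fin n) K)) :
    Ideal (MvPolynomial (Fin n) K) :=
  Ideal.span {g | ∃ f ∈ I, f ≠ 0 ∧ g = monomial (leadMonomial m f) (1 : K)}

/-- `G` is a σ-Gröbner basis of `I`: a finite set of nonzero elements of `I` whose
leading monomials generate the leading term ideal of `I`. -/
def IsGroebnerBasis {n : ℕ} {K : Type*} [Field K]
    (m : MonomialOrder (Fin n)) (I : Ideal (MvPolynomial (Fin n) K))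
    (G : Finset (MvPolynomial (Fin n) K)) : Prop :=
  (∀ g ∈ G, g ≠ 0 ∧ g ∈ I) ∧
    leadTermIdeal m I =
      Ideal.span ((fun g => monomial (leadMonomial m g) (1 : K)) '' (G : Set (MvPolynomial (Fin n) K)))

/-- `G` is a minimal monic σ-Gröbner basis of `I`. -/
def IsMinimalMonicGB {n : ℕ} {K : Type*} [Field K]
    (m : MonomialOrder (Fin n)) (I : Ideal (MvPolynomial (Fin n) K))
    (G : Finset (MvPolynomial (Fin n) K)) : Prop :=
  IsGroebnerBasis m I G ∧
    (∀ g ∈ G, coeff (leadMonomial m g) g = 1) ∧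
    (∀ g ∈ G, ∀ g' ∈ G, g ≠ g' → ¬ leadMonomial m g ≤ leadMonomial m g')

/-- A nonzero polynomial is factor-closed if some exponent vector of its support is
divisible (componentwise) by all exponent vectors of its support. -/
def FactorClosed {n : ℕ} {K : Type*} [Field K] (f : MvPolynomial (Fin n) K) : Prop :=
  ∃ t ∈ f.support, ∀ s ∈ f.support, s ≤ t

section Aux

variable {n : ℕ} {K : Type*} [Field K]

lemma toSyn_leadMonomial (m : MonomialOrder (Fin n)) (f : MvPolynomial (Fin n) K) :
    m.toSyn (leadMonomial m f) = f.support.sup fun s => m.toSyn s := by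
  simp [leadMonomial]

lemma leadMonomial_mem_support (m : MonomialOrder (Fin n)) {f : MvPolynomial (Fin n) K}
    (hf : f ≠ 0) : leadMonomial m f ∈ f.support := by
  obtain ⟨s, hs, h2⟩ := Finset.exists_mem_eq_sup f.support
    (support_nonempty.mpr hf) (fun s => m.toSyn s)
  rw [leadMonomial, h2, AddEquiv.symm_apply_apply]
  exact hs

lemma le_toSyn_leadMonomial (m : MonomialOrder (Fin n)) {f : MvPolynomial (Fin n) K}
    {s : Fin n →₀ ℕ} (hs : s ∈ f.support) :
    m.toSyn s ≤ m.toSyn (leadMonomial m f) := by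
  rw [toSyn_leadMonomial]
  exact Finset.le_sup hs

lemma leadMonomial_eq_top (σ' : MonomialOrder (Fin n)) {f : MvPolynomial (Fin n) K}
    {t : Fin n →₀ ℕ} (ht : t ∈ f.support) (htop : ∀ s ∈ f.support, s ≤ t) :
    leadMonomial σ' f = t := by
  apply σ'.toSyn.injective
  rw [toSyn_leadMonomial]
  exact le_antisymm (Finset.sup_le fun s hs => σ'.toSyn_monotone (htop s hs))
    (Finset.le_sup ht)

lemma leadMonomial_eq_of_factorClosed {f : MvPolynomial (Fin n) K}
    (hfc : FactorClosed f) (τ m : MonomialOrder (Fin n)) :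
    leadMonomial τ f = leadMonomial m f := by
  obtain ⟨t, ht, htop⟩ := hfc
  rw [leadMonomial_eq_top τ ht htop, leadMonomial_eq_top m ht htop]

lemma division_algorithm (τ : MonomialOrder (Fin n)) (G : Finset (MvPolynomial (Fin n) K))
    (hG0 : ∀ g ∈ G, g ≠ 0) (f : MvPolynomial (Fin n) K) :
    ∃ (q : MvPolynomial (Fin n) K → MvPolynomial (Fin n) K) (r : MvPolynomial (Fin n) K),
      f = (∑ g ∈ G, q g * g) + r ∧
      (∀ g ∈ G, ∀ s ∈ (q g).support, ∀ u ∈ g.support,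
        τ.toSyn (s + u) ≤ τ.toSyn (leadMonomial τ f)) ∧
      (∀ c ∈ r.support, ∀ g ∈ G, ¬ leadMonomial τ g ≤ c) := by
  classical
  suffices H : ∀ b : τ.syn, ∀ f : MvPolynomial (Fin n) K,
      τ.toSyn (leadMonomial τ f) ≤ b →
      ∃ (q : MvPolynomial (Fin n) K → MvPolynomial (Fin n) K) (r : MvPolynomial (Fin n) K),
        f = (∑ g ∈ G, q g * g) + r ∧
        (∀ g ∈ G, ∀ s ∈ (q g).support, ∀ u ∈ g.support,
          τ.toSyn (s + u) ≤ τ.toSyn (leadMonomial τ f)) ∧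
        (∀ c ∈ r.support, ∀ g ∈ G, ¬ leadMonomial τ g ≤ c) from H _ f le_rfl
  intro b
  induction b using WellFoundedLT.induction with
  | _ b IH =>
  intro f hfb
  by_cases hf : f = 0
  · exact ⟨0, 0, by simp [hf], by simp, by simp⟩
  set t := leadMonomial τ f with htdef
  have htf : t ∈ f.support := leadMonomial_mem_support τ hf
  have step : ∀ f' : MvPolynomial (Fin n) K, (∀ s ∈ f'.support, τ.toSyn s < τ.toSyn t) →
      ∃ (q' : MvPolynomial (Fin n) K → MvPolynomial (Fin n) K) (r' : MvPolynomial (Fin n) K),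
        f' = (∑ g ∈ G, q' g * g) + r' ∧
        (∀ g ∈ G, ∀ s ∈ (q' g).support, ∀ u ∈ g.support, τ.toSyn (s + u) ≤ τ.toSyn t) ∧
        (∀ c ∈ r'.support, ∀ g ∈ G, ¬ leadMonomial τ g ≤ c) := by
    intro f' hlt
    by_cases hf' : f' = 0
    · exact ⟨0, 0, by simp [hf'], by simp, by simp⟩
    · have h1 : τ.toSyn (leadMonomial τ f') < τ.toSyn t :=
        hlt _ (leadMonomial_mem_support τ hf')
      obtain ⟨q', r', he, hq, hr⟩ := IH _ (lt_of_lt_of_le h1 hfb) f' le_rfl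
      exact ⟨q', r', he, fun g hg s hs u hu =>
        le_of_lt (lt_of_le_of_lt (hq g hg s hs u hu) h1), hr⟩
  by_cases hdvd : ∃ g ∈ G, leadMonomial τ g ≤ t
  · obtain ⟨g, hgG, hgle⟩ := hdvd
    set a := leadMonomial τ g with ha
    have hlc : coeff a g ≠ 0 := mem_support_iff.mp (leadMonomial_mem_support τ (hG0 g hgG))
    set c : K := coeff t f / coeff a g with hc
    set δ := t - a with hδ
    have hδa : δ + a = t := tsub_add_cancel_of_le hgle
    have hmono_bound : ∀ u ∈ g.support, τ.toSyn (δ + u) ≤ τ.toSyn t := by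
      intro u hu
      calc τ.toSyn (δ + u) = τ.toSyn δ + τ.toSyn u := map_add _ _ _
        _ ≤ τ.toSyn δ + τ.toSyn a := add_le_add_right (le_toSyn_leadMonomial τ hu) _
        _ = τ.toSyn (δ + a) := (map_add _ _ _).symm
        _ = τ.toSyn t := by rw [hδa]
    set f' := f - monomial δ c * g with hf'def
    have hsupp_mul : ∀ s ∈ (monomial δ c * g).support, τ.toSyn s ≤ τ.toSyn t := by
      intro s hs
      rw [mem_support_iff, coeff_monomial_mul'] at hs
      by_cases hds : δ ≤ s
      · rw [if_pos hds] at hs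
        have hsg : s - δ ∈ g.support := by
          rw [mem_support_iff]
          intro h0
          exact hs (by rw [h0, mul_zero])
        have := hmono_bound _ hsg
        rwa [add_tsub_cancel_of_le hds] at this
      · rw [if_neg hds] at hs; exact absurd rfl hs
    have hf'lt : ∀ s ∈ f'.support, τ.toSyn s < τ.toSyn t := by
      intro s hs
      have hne : s ≠ t := by
        intro hst
        rw [mem_support_iff] at hs
        apply hs
        rw [hst, hf'def, coeff_sub, coeff_monomial_mul', if_pos tsub_le_self,
          tsub_tsub_cancel_of_le hgle, hc, div_mul_cancel₀ _ hlc, sub_self]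
      have hle : τ.toSyn s ≤ τ.toSyn t := by
        rcases Finset.mem_union.mp (support_sub _ _ _ hs) with h | h
        · exact le_toSyn_leadMonomial τ h
        · exact hsupp_mul s h
      exact lt_of_le_of_ne hle (fun h => hne (τ.toSyn.injective h))
    obtain ⟨q', r', he, hq, hr⟩ := step f' hf'lt
    refine ⟨fun x => if x = g then monomial δ c + q' x else q' x, r', ?_, ?_, hr⟩
    · have hsum : (∑ x ∈ G, (if x = g then monomial δ c + q' x else q' x) * x)
          = (∑ x ∈ G, q' x * x) + monomial δ c * g := by
        have h1 : ∀ x ∈ G, (if x = g then monomial δ c + q' x else q' x) * x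
            = q' x * x + (if x = g then monomial δ c * x else 0) := by
          intro x _
          split_ifs with h
          · ring
          · ring
        rw [Finset.sum_congr rfl h1, Finset.sum_add_distrib,
          Finset.sum_ite_eq' G g (fun x => monomial δ c * x), if_pos hgG]
      rw [hsum]
      linear_combination he
    · intro x hx s hs u hu
      by_cases hxg : x = g
      · simp only [if_pos hxg] at hs
        rcases Finset.mem_union.mp (support_add hs) with h | h
        · have hsδ : s = δ := Finset.mem_singleton.mp (support_monomial_subset h)
          subst hsδ
          exact hmono_bound u (hxg ▸ hu)
        · exact hq x hx s h u hu
      · simp only [if_neg hxg] at hs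
        exact hq x hx s hs u hu
  · push_neg at hdvd
    set f' := f - monomial t (coeff t f) with hf'def
    have hf'lt : ∀ s ∈ f'.support, τ.toSyn s < τ.toSyn t := by
      intro s hs
      have hne : s ≠ t := by
        intro hst
        rw [mem_support_iff, hst, hf'def, coeff_sub, coeff_monomial, if_pos rfl, sub_self] at hs
        exact hs rfl
      have hsf : s ∈ f.support := by
        rcases Finset.mem_union.mp (support_sub _ _ _ hs) with h | h
        · exact h
        · exact absurd (Finset.mem_singleton.mp (support_monomial_subset h)) hne
      exact lt_of_le_of_ne (le_toSyn_leadMonomial τ hsf) (fun h => hne (τ.toSyn.injective h))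
    obtain ⟨q', r', he, hq, hr⟩ := step f' hf'lt
    refine ⟨q', r' + monomial t (coeff t f), by linear_combination he, hq, ?_⟩
    intro x hx g hgG
    rcases Finset.mem_union.mp (support_add hx) with h | h
    · exact hr x h g hgG
    · have : x = t := Finset.mem_singleton.mp (support_monomial_subset h)
      subst this
      exact hdvd g hgG

lemma exists_divisor_of_monomial_mem (m : MonomialOrder (Fin n))
    (G : Finset (MvPolynomial (Fin n) K)) {s : Fin n →₀ ℕ}
    (h : (monomial s (1 : K)) ∈
      Ideal.span ((fun g => monomial (leadMonomial m g) (1 : K)) ''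
        (G : Set (MvPolynomial (Fin n) K)))) :
    ∃ g ∈ G, leadMonomial m g ≤ s := by
  classical
  rw [Ideal.span, Submodule.mem_span_set] at h
  obtain ⟨c, hcsupp, hsum⟩ := h
  by_contra hcon
  push_neg at hcon
  have h0 : ∀ p ∈ c.support, coeff s (c p • p) = 0 := by
    intro p hp
    obtain ⟨g, hgG, rfl⟩ := hcsupp hp
    rw [smul_eq_mul, coeff_mul_monomial', if_neg (hcon g hgG)]
  have : coeff s (monomial s (1 : K)) = 0 := by
    rw [← hsum, Finsupp.sum, coeff_sum]
    exact Finset.sum_eq_zero h0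
  rw [coeff_monomial, if_pos rfl] at this
  exact one_ne_zero this

lemma exists_leadMonomial_divisor
    (m : MonomialOrder (Fin n)) (I : Ideal (MvPolynomial (Fin n) K))
    (G : Finset (MvPolynomial (Fin n) K))
    (hGB : IsGroebnerBasis m I G) (hfc : ∀ g ∈ G, FactorClosed g)
    (τ : MonomialOrder (Fin n)) {f : MvPolynomial (Fin n) K}
    (hfI : f ∈ I) (hf0 : f ≠ 0) :
    ∃ g ∈ G, leadMonomial τ g ≤ leadMonomial τ f := by
  classical
  obtain ⟨q, r, he, hq, hr⟩ := division_algorithm τ G (fun g hg => (hGB.1 g hg).1) f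
  have hsumI : (∑ g ∈ G, q g * g) ∈ I :=
    Ideal.sum_mem _ fun g hg => Ideal.mul_mem_left _ _ (hGB.1 g hg).2
  have hrI : r ∈ I := by
    have hre : r = f - ∑ g ∈ G, q g * g := by rw [he]; ring
    rw [hre]; exact Ideal.sub_mem _ hfI hsumI
  have hr0 : r = 0 := by
    by_contra hr0
    have hmem : monomial (leadMonomial m r) (1 : K) ∈ leadTermIdeal m I :=
      Ideal.subset_span ⟨r, hrI, hr0, rfl⟩
    rw [hGB.2] at hmem
    obtain ⟨g, hgG, hle⟩ := exists_divisor_of_monomial_mem m G hmem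
    have heq : leadMonomial τ g = leadMonomial m g :=
      leadMonomial_eq_of_factorClosed (hfc g hgG) τ m
    exact hr _ (leadMonomial_mem_support m hr0) g hgG (heq ▸ hle)
  rw [hr0, add_zero] at he
  have htf : leadMonomial τ f ∈ f.support := leadMonomial_mem_support τ hf0
  set t := leadMonomial τ f with htdef
  have hbi : t ∈ (Finset.biUnion G fun g => (q g * g).support) :=
    support_sum (he ▸ htf)
  obtain ⟨g, hgG, htg⟩ := Finset.mem_biUnion.mp hbi
  obtain ⟨sq, hsq, u, hu, hsu⟩ := Finset.mem_add.mp (support_mul _ _ htg)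
  have h1 : τ.toSyn (sq + leadMonomial τ g) ≤ τ.toSyn t :=
    hq g hgG sq hsq (leadMonomial τ g) (leadMonomial_mem_support τ (hGB.1 g hgG).1)
  have h2 : τ.toSyn t ≤ τ.toSyn (sq + leadMonomial τ g) := by
    rw [← hsu, map_add, map_add]
    exact add_le_add_right (le_toSyn_leadMonomial τ hu) _
  have h3 : sq + leadMonomial τ g = t := τ.toSyn.injective (le_antisymm h1 h2)
  exact ⟨g, hgG, h3 ▸ le_add_self⟩

lemma isGroebnerBasis_of_factorClosed
    (m : MonomialOrder (Fin n)) (I : Ideal (MvPolynomial (Fin n) K))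
    (G : Finset (MvPolynomial (Fin n) K))
    (hGB : IsGroebnerBasis m I G) (hfc : ∀ g ∈ G, FactorClosed g)
    (τ : MonomialOrder (Fin n)) : IsGroebnerBasis τ I G := by
  refine ⟨hGB.1, le_antisymm ?_ ?_⟩
  · rw [leadTermIdeal, Ideal.span_le]
    rintro x ⟨f, hfI, hf0, rfl⟩
    obtain ⟨g, hgG, hle⟩ := exists_leadMonomial_divisor m I G hGB hfc τ hfI hf0
    have hmul : monomial (leadMonomial τ f) (1 : K)
        = monomial (leadMonomial τ g) (1 : K)
          * monomial (leadMonomial τ f - leadMonomial τ g) 1 := by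
      rw [monomial_mul, mul_one, add_tsub_cancel_of_le hle]
    rw [SetLike.mem_coe, hmul]
    exact Ideal.mul_mem_right _ _ (Ideal.subset_span ⟨g, hgG, rfl⟩)
  · rw [Ideal.span_le]
    rintro x ⟨g, hgG, rfl⟩
    exact Ideal.subset_span ⟨g, (hGB.1 g hgG).2, (hGB.1 g hgG).1, rfl⟩

lemma main_aux
    (m : MonomialOrder (Fin n)) (I : Ideal (MvPolynomial (Fin n) K))
    (G : Finset (MvPolynomial (Fin n) K))
    (hG : IsMinimalMonicGB m I G) (hfc : ∀ g ∈ G, FactorClosed g)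
    (τ : MonomialOrder (Fin n)) :
    (∀ g ∈ G, leadMonomial τ g = leadMonomial m g) ∧
      IsGroebnerBasis τ I G ∧ leadTermIdeal τ I = leadTermIdeal m I := by
  have hLM : ∀ g ∈ G, leadMonomial τ g = leadMonomial m g :=
    fun g hg => leadMonomial_eq_of_factorClosed (hfc g hg) τ m
  have hGBτ := isGroebnerBasis_of_factorClosed m I G hG.1 hfc τ
  refine ⟨hLM, hGBτ, ?_⟩
  rw [hGBτ.2, hG.1.2]
  congr 1
  exact Set.image_congr fun g hg => by rw [hLM g hg]

end Aux

theorem minimal_monic_factor_closed_GFanNum_one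
    {n : ℕ} {K : Type*} [Field K]
    (m : MonomialOrder (Fin n)) (I : Ideal (MvPolynomial (Fin n) K))
    (G : Finset (MvPolynomial (Fin n) K))
    (hG : IsMinimalMonicGB m I G) (hfc : ∀ g ∈ G, FactorClosed g) :
    (∀ τ : MonomialOrder (Fin n),
        (∀ g ∈ G, leadMonomial τ g = leadMonomial m g) ∧
        IsGroebnerBasis τ I G ∧
        leadTermIdeal τ I = leadTermIdeal m I) ∧
      ∀ τ τ' : MonomialOrder (Fin n), leadTermIdeal τ I = leadTermIdeal τ' I := by
  exact ⟨fun τ => main_aux m I G hG hfc τ,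
    fun τ τ' => by
      rw [(main_aux m I G hG hfc τ).2.2, (main_aux m I G hG hfc τ').2.2]⟩
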